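/- Let θ > 0, let κₙ, κ : [0,θ] → ℝ be continuous with κₙ → κ uniformly on [0,θ], and let uₙ and u be the solutions of w'' + κₙw = 0 and w'' + κw = 0 on [0,θ] with w(0) = 0, w'(0) = 1. Assume u(s) > 0 for all s ∈ (0,θ) and u(θ) = 0. Then for every t ∈ (0,1) and every M > 0 there exists N such that for all n ≥ N, either uₙ has a zero in (0,θ], or uₙ(tθ) > M·uₙ(θ). (Divergence of the distortion coefficients σ_{κₙ}^{(t)}(θ) to +∞ when the limit coefficient is degenerate at θ.) -/

import Mathlib

open Set

/-- `u` is a (twice continuously differentiable) solution of `u'' + κ·u = 0` on the set `s`,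
with first and second derivative functions `u'` and `u''`. -/
def SturmSol (κ u u' u'' : ℝ → ℝ) (s : Set ℝ) : Prop :=
  (∀ t ∈ s, HasDerivWithinAt u (u' t) s t) ∧
  (∀ t ∈ s, HasDerivWithinAt u' (u'' t) s t) ∧
  ContinuousOn u'' s ∧
  (∀ t ∈ s, u'' t + κ t * u t = 0)

/-- Gronwall-type continuous dependence estimate for Sturm solutions. -/
lemma sturm_close
    (θ : ℝ) (hθ : 0 < θ)
    (κ1 κ : ℝ → ℝ)
    (u1 u1' u1'' u u' u'' : ℝ → ℝ)
    (h1 : SturmSol κ1 u1 u1' u1'' (Icc 0 θ))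
    (h : SturmSol κ u u' u'' (Icc 0 θ))
    (h10 : u1 0 = u 0) (h1'0 : u1' 0 = u' 0)
    (K Cu ε : ℝ) (hK : 0 ≤ K) (hε : 0 ≤ ε)
    (hCu : ∀ x ∈ Icc 0 θ, |u x| ≤ Cu)
    (hκ1K : ∀ x ∈ Icc 0 θ, |κ1 x| ≤ K)
    (hdiff : ∀ x ∈ Icc 0 θ, |κ1 x - κ x| ≤ ε) :
    ∀ x ∈ Icc (0:ℝ) θ, |u1 x - u x| ≤ gronwallBound 0 (K + 1) (ε * Cu) x := by
  have h0mem : (0:ℝ) ∈ Icc (0:ℝ) θ := ⟨le_refl 0, hθ.le⟩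
  have hCu0 : 0 ≤ Cu := le_trans (abs_nonneg _) (hCu 0 h0mem)
  set f : ℝ → ℝ × ℝ := fun x => (u1 x - u x, u1' x - u' x) with hf_def
  set g : ℝ → ℝ × ℝ := fun x => (u1' x - u' x, u1'' x - u'' x) with hg_def
  have hcont : ContinuousOn f (Icc 0 θ) := by
    apply ContinuousOn.prodMk
    · exact ContinuousOn.sub (fun x hx => (h1.1 x hx).continuousWithinAt)
        (fun x hx => (h.1 x hx).continuousWithinAt)
    · exact ContinuousOn.sub (fun x hx => (h1.2.1 x hx).continuousWithinAt)
        (fun x hx => (h.2.1 x hx).continuousWithinAt)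
  have hderiv : ∀ x ∈ Ico (0:ℝ) θ, HasDerivWithinAt f (g x) (Ici x) x := by
    intro x hx
    have hxI : x ∈ Icc (0:ℝ) θ := ⟨hx.1, hx.2.le⟩
    have hmem : Icc (0:ℝ) θ ∈ nhdsWithin x (Ici x) := by
      rw [mem_nhdsWithin]
      exact ⟨Iio θ, isOpen_Iio, hx.2, fun y hy => ⟨le_trans hx.1 hy.2, hy.1.le⟩⟩
    have d1 : HasDerivWithinAt (fun y => u1 y - u y) (u1' x - u' x) (Icc 0 θ) x :=
      (h1.1 x hxI).sub (h.1 x hxI)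
    have d2 : HasDerivWithinAt (fun y => u1' y - u' y) (u1'' x - u'' x) (Icc 0 θ) x :=
      (h1.2.1 x hxI).sub (h.2.1 x hxI)
    exact (d1.prodMk d2).mono_of_mem_nhdsWithin hmem
  have hinit : ‖f 0‖ ≤ 0 := by
    have : f 0 = 0 := by
      simp only [hf_def, h10, h1'0, sub_self, Prod.mk_zero_zero]
    rw [this, norm_zero]
  have hbound : ∀ x ∈ Ico (0:ℝ) θ, ‖g x‖ ≤ (K + 1) * ‖f x‖ + ε * Cu := by
    intro x hx
    have hxI : x ∈ Icc (0:ℝ) θ := ⟨hx.1, hx.2.le⟩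
    have hfx1 : |u1 x - u x| ≤ ‖f x‖ := by
      rw [Prod.norm_def]; exact le_max_of_le_left (le_of_eq (Real.norm_eq_abs _).symm)
    have hfx2 : |u1' x - u' x| ≤ ‖f x‖ := by
      rw [Prod.norm_def]; exact le_max_of_le_right (le_of_eq (Real.norm_eq_abs _).symm)
    have hfnn : 0 ≤ ‖f x‖ := norm_nonneg _
    simp only [hg_def]
    rw [Prod.norm_def]
    apply max_le
    · rw [Real.norm_eq_abs]
      nlinarith [mul_nonneg (mul_nonneg hK hfnn) (le_refl (0:ℝ)), mul_nonneg hK hfnn,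
        mul_nonneg hε hCu0]
    · rw [Real.norm_eq_abs]
      have e1 : u1'' x = -(κ1 x * u1 x) := by linarith [h1.2.2.2 x hxI]
      have e2 : u'' x = -(κ x * u x) := by linarith [h.2.2.2 x hxI]
      have : u1'' x - u'' x = -(κ1 x * (u1 x - u x)) - (κ1 x - κ x) * u x := by
        rw [e1, e2]; ring
      rw [this]
      have hb : |-(κ1 x * (u1 x - u x)) - (κ1 x - κ x) * u x|
          ≤ |κ1 x| * |u1 x - u x| + |κ1 x - κ x| * |u x| := by
        calc _ ≤ |(-(κ1 x * (u1 x - u x)))| + |(κ1 x - κ x) * u x| := abs_sub _ _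
        _ = |κ1 x| * |u1 x - u x| + |κ1 x - κ x| * |u x| := by
            rw [abs_neg, abs_mul, abs_mul]
      have t1 : |κ1 x| * |u1 x - u x| ≤ K * ‖f x‖ :=
        mul_le_mul (hκ1K x hxI) hfx1 (abs_nonneg _) hK
      have t2 : |κ1 x - κ x| * |u x| ≤ ε * Cu :=
        mul_le_mul (hdiff x hxI) (hCu x hxI) (abs_nonneg _) hε
      nlinarith
  have main := norm_le_gronwallBound_of_norm_deriv_right_le hcont hderiv hinit hbound
  intro x hx
  have := main x hx
  rw [sub_zero] at this
  refine le_trans ?_ this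
  rw [Prod.norm_def]
  exact le_max_of_le_left (le_of_eq (Real.norm_eq_abs _).symm)

/-- Divergence of the distortion coefficients `σ_{κₙ}^{(t)}(θ)` to `+∞` when the limit
coefficient is degenerate at `θ`. -/
theorem distortion_divergence
    (θ : ℝ) (hθ : 0 < θ)
    (κn : ℕ → ℝ → ℝ) (κ : ℝ → ℝ)
    (hκn : ∀ n, ContinuousOn (κn n) (Icc 0 θ)) (hκ : ContinuousOn κ (Icc 0 θ))
    (hconv : TendstoUniformlyOn κn κ Filter.atTop (Icc 0 θ))
    (un un' un'' : ℕ → ℝ → ℝ) (u u' u'' : ℝ → ℝ)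
    (hun : ∀ n, SturmSol (κn n) (un n) (un' n) (un'' n) (Icc 0 θ))
    (hu : SturmSol κ u u' u'' (Icc 0 θ))
    (hun0 : ∀ n, un n 0 = 0) (hun'0 : ∀ n, un' n 0 = 1)
    (hu0 : u 0 = 0) (hu'0 : u' 0 = 1)
    (hupos : ∀ s ∈ Ioo 0 θ, 0 < u s) (huθ : u θ = 0) :
    ∀ t ∈ Ioo (0:ℝ) 1, ∀ M > (0:ℝ), ∃ N : ℕ, ∀ n ≥ N,
      (∃ s ∈ Ioc 0 θ, un n s = 0) ∨ M * un n θ < un n (t * θ) := by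
  intro t ht M hM
  have h0mem : (0:ℝ) ∈ Icc (0:ℝ) θ := ⟨le_refl 0, hθ.le⟩
  -- continuity of u and un
  have hucont : ContinuousOn u (Icc 0 θ) := fun x hx => (hu.1 x hx).continuousWithinAt
  have huncont : ∀ n, ContinuousOn (un n) (Icc 0 θ) :=
    fun n x hx => ((hun n).1 x hx).continuousWithinAt
  -- bounds on κ and u
  obtain ⟨Ck, hCk⟩ := isCompact_Icc.exists_bound_of_continuousOn hκ
  obtain ⟨Cu, hCu⟩ := isCompact_Icc.exists_bound_of_continuousOn hucont
  simp only [Real.norm_eq_abs] at hCk hCu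
  have hCk0 : 0 ≤ Ck := le_trans (abs_nonneg _) (hCk 0 h0mem)
  have hCu0 : 0 ≤ Cu := le_trans (abs_nonneg _) (hCu 0 h0mem)
  set K : ℝ := Ck + 1 with hK_def
  have hK0 : (0:ℝ) ≤ K := by linarith
  -- the point t*θ and positivity of u there
  set x1 : ℝ := t * θ with hx1_def
  have hx1 : x1 ∈ Ioo (0:ℝ) θ := by
    constructor
    · exact mul_pos ht.1 hθ
    · calc x1 = t * θ := rfl
        _ < 1 * θ := by apply mul_lt_mul_of_pos_right ht.2 hθ
        _ = θ := one_mul θ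
  set p : ℝ := u x1 with hp_def
  have hp : 0 < p := hupos x1 hx1
  set η : ℝ := min (p / 2) (p / (2 * M)) with hη_def
  have hη : 0 < η := lt_min (by linarith) (div_pos hp (by linarith))
  -- Gronwall constant
  set B : ℝ := Cu / (K + 1) * (Real.exp ((K + 1) * θ) - 1) with hB_def
  have hB0 : 0 ≤ B := by
    apply mul_nonneg (div_nonneg hCu0 (by linarith))
    have : (1:ℝ) ≤ Real.exp ((K + 1) * θ) := Real.one_le_exp (by positivity)
    linarith
  set ε : ℝ := min (η / (2 * (B + 1))) 1 with hε_def
  have hε0 : 0 < ε := lt_min (by positivity) one_pos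
  -- uniform closeness of κn to κ
  have hev := Metric.tendstoUniformlyOn_iff.mp hconv ε hε0
  obtain ⟨N, hN⟩ := Filter.eventually_atTop.mp hev
  refine ⟨N, fun n hn => ?_⟩
  have hκclose : ∀ x ∈ Icc (0:ℝ) θ, |κn n x - κ x| ≤ ε := by
    intro x hx
    have := hN n hn x hx
    rw [Real.dist_eq, abs_sub_comm] at this
    exact this.le
  have hκnK : ∀ x ∈ Icc (0:ℝ) θ, |κn n x| ≤ K := by
    intro x hx
    have h1 := hκclose x hx
    have h2 := hCk x hx
    have hε1 : ε ≤ 1 := min_le_right _ _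
    calc |κn n x| = |κ x + (κn n x - κ x)| := by ring_nf
      _ ≤ |κ x| + |κn n x - κ x| := abs_add_le _ _
      _ ≤ Ck + 1 := by linarith
  -- apply the Gronwall estimate
  have hgron := sturm_close θ hθ (κn n) κ (un n) (un' n) (un'' n) u u' u''
    (hun n) hu (by rw [hun0, hu0]) (by rw [hun'0, hu'0])
    K Cu ε hK0 hε0.le hCu hκnK hκclose
  have hKne : K + 1 ≠ 0 := by linarith
  have hclose : ∀ x ∈ Icc (0:ℝ) θ, |un n x - u x| ≤ η / 2 := by
    intro x hx
    refine le_trans (hgron x hx) ?_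
    rw [gronwallBound_of_K_ne_0 hKne]
    have hexp : Real.exp ((K + 1) * x) ≤ Real.exp ((K + 1) * θ) :=
      Real.exp_le_exp.mpr (mul_le_mul_of_nonneg_left hx.2 (by linarith))
    have hexp1 : (1:ℝ) ≤ Real.exp ((K + 1) * x) :=
      Real.one_le_exp (mul_nonneg (by linarith) hx.1)
    have step1 : 0 * Real.exp ((K + 1) * x)
        + ε * Cu / (K + 1) * (Real.exp ((K + 1) * x) - 1) ≤ ε * B := by
      have heq : 0 * Real.exp ((K + 1) * x)
          + ε * Cu / (K + 1) * (Real.exp ((K + 1) * x) - 1)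
          = ε * (Cu / (K + 1) * (Real.exp ((K + 1) * x) - 1)) := by ring
      rw [heq, hB_def]
      apply mul_le_mul_of_nonneg_left _ hε0.le
      apply mul_le_mul_of_nonneg_left _ (div_nonneg hCu0 (by linarith))
      linarith
    refine le_trans step1 ?_
    have hεB : ε ≤ η / (2 * (B + 1)) := min_le_left _ _
    have : ε * B ≤ η / (2 * (B + 1)) * B :=
      mul_le_mul_of_nonneg_right hεB hB0
    refine le_trans this ?_
    rw [div_mul_eq_mul_div, div_le_div_iff₀ (by positivity) (by norm_num)]
    nlinarith
  -- numeric consequences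
  have hx1I : x1 ∈ Icc (0:ℝ) θ := ⟨hx1.1.le, hx1.2.le⟩
  have hθI : θ ∈ Icc (0:ℝ) θ := ⟨hθ.le, le_refl θ⟩
  have h1 := hclose x1 hx1I
  have h2 := hclose θ hθI
  rw [huθ, sub_zero] at h2
  have hη1 : η ≤ p / 2 := min_le_left _ _
  have hη2 : η ≤ p / (2 * M) := min_le_right _ _
  have hun_x1 : 3 * p / 4 ≤ un n x1 := by
    have := (abs_le.mp h1).1
    have : -(η / 2) ≤ un n x1 - p := this
    linarith
  have hunθ_le : un n θ ≤ η / 2 := (abs_le.mp h2).2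
  by_cases hz : 0 < un n θ
  · right
    have hMη : M * η ≤ p / 2 := by
      have := mul_le_mul_of_nonneg_left hη2 hM.le
      have heq : M * (p / (2 * M)) = p / 2 := by
        field_simp
      linarith [heq ▸ this]
    have : M * un n θ ≤ M * (η / 2) := mul_le_mul_of_nonneg_left hunθ_le hM.le
    nlinarith
  · left
    push_neg at hz
    rcases eq_or_lt_of_le hz with heq | hlt
    · exact ⟨θ, ⟨hθ, le_refl θ⟩, heq⟩
    · -- un n θ < 0 < un n x1 : IVT gives a zero in (x1, θ)
      have hx1θ : x1 ≤ θ := hx1.2.le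
      have hcont' : ContinuousOn (un n) (Icc x1 θ) :=
        (huncont n).mono (Icc_subset_Icc hx1.1.le (le_refl θ))
      have h0mem' : (0:ℝ) ∈ Ioo (un n θ) (un n x1) := ⟨hlt, by nlinarith⟩
      have := intermediate_value_Ioo' hx1θ hcont' h0mem'
      obtain ⟨s, hs, hfs⟩ := this
      exact ⟨s, ⟨lt_trans hx1.1 hs.1, hs.2.le⟩, hfs⟩
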